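/- arXiv:2009.06835 — 3 statements merged into one kernel-verified Lean document; each statement's English description precedes it below -/
import Mathlib

section
/- Let (f, φ) : A ⇄ B and (g, γ) : B ⇄ C be delta lenses between small categories, with induced categories Λ (for φ) and Ω (for γ) and induced functors φ̄ : Λ → B and γ : Ω → B (the identity-on-objects functor sending (b, w) ↦ γ₁(b, w)). Then the induced category of the composite delta lens (g ∘ f, φ ∘ γ) is isomorphic, as a category, to the pullback Λ ×_B Ω of the functors φ̄ : Λ → B and γ : Ω → B (the category whose objects are pairs (x, y) of objects with φ̄(x) = γ(y) and whose morphisms are pairs of morphisms (m, n) with φ̄(m) = γ(n)). -/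
open CategoryTheory

universe v v₁ v₂ v₃ v₄ u u₁ u₂ u₃ u₄

/-- A cofunctor `φ` from a small category `B` to a small category `A` consists of an
object map `φ₀ : A → B` together with, for each object `a` of `A` and morphism
`u : φ₀(a) ⟶ b` of `B`, a chosen object `p₀(a, u)` of `A` and a chosen lift
`φ₁(a, u) : a ⟶ p₀(a, u)`, such that (i) `φ₀(p₀(a, u)) = b`, (ii) `p₀(a, 1) = a` and
`φ₁(a, 1) = 1ₐ`, and (iii) `p₀(a, v ∘ u) = p₀(p₀(a, u), v)` and
`φ₁(a, v ∘ u) = φ₁(p₀(a, u), v) ∘ φ₁(a, u)`. -/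
structure Cofunctor (B : Type u₁) (A : Type u₂) [Category.{v₁} B] [Category.{v₂} A] where
  /-- the object map `φ₀` -/
  obj : A → B
  /-- the codomain `p₀(a, u)` of the chosen lift -/
  p : ∀ (a : A) ⦃b : B⦄, (obj a ⟶ b) → A
  /-- the chosen lift `φ₁(a, u) : a ⟶ p₀(a, u)` -/
  lift : ∀ (a : A) ⦃b : B⦄ (u : obj a ⟶ b), a ⟶ p a u
  /-- law (i): `φ₀(p₀(a, u)) = b` -/
  obj_p : ∀ (a : A) ⦃b : B⦄ (u : obj a ⟶ b), obj (p a u) = b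
  /-- law (ii), object part: `p₀(a, 1) = a` -/
  p_id : ∀ a : A, p a (𝟙 (obj a)) = a
  /-- law (ii), morphism part: `φ₁(a, 1) = 1ₐ` -/
  lift_id : ∀ a : A, lift a (𝟙 (obj a)) = eqToHom (p_id a).symm
  /-- law (iii), object part: `p₀(a, v ∘ u) = p₀(p₀(a, u), v)` -/
  p_comp : ∀ (a : A) ⦃b c : B⦄ (u : obj a ⟶ b) (v : b ⟶ c),
      p a (u ≫ v) = p (p a u) (eqToHom (obj_p a u) ≫ v)
  /-- law (iii), morphism part: `φ₁(a, v ∘ u) = φ₁(p₀(a, u), v) ∘ φ₁(a, u)` -/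
  lift_comp : ∀ (a : A) ⦃b c : B⦄ (u : obj a ⟶ b) (v : b ⟶ c),
      lift a (u ≫ v) =
        lift a u ≫ lift (p a u) (eqToHom (obj_p a u) ≫ v) ≫ eqToHom (p_comp a u v).symm

variable {B : Type u₁} {A : Type u₂} [Category.{v₁} B] [Category.{v₂} A]

/-- A morphism `a → a′` of the category `Λ` induced by a cofunctor `φ`:
a pair `(a, u)` where `u : φ₀(a) ⟶ b` is a morphism of `B` and `p₀(a, u) = a′`. -/
def LambdaHom (φ : Cofunctor B A) (a a' : A) : Type _ :=
  Σ b : B, { u : φ.obj a ⟶ b // φ.p a u = a' }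

/-- The identity morphism `(a, 1_{φ₀(a)})` of `Λ`. -/
def lambdaId (φ : Cofunctor B A) (a : A) : LambdaHom φ a a :=
  ⟨φ.obj a, 𝟙 (φ.obj a), φ.p_id a⟩

/-- The composition `(p₀(a, u), v) ∘ (a, u) = (a, v ∘ u)` of `Λ`. -/
def lambdaComp (φ : Cofunctor B A) {a a' a'' : A}
    (m : LambdaHom φ a a') (n : LambdaHom φ a' a'') : LambdaHom φ a a'' :=
  ⟨n.1, m.2.1 ≫ eqToHom ((φ.obj_p a m.2.1).symm.trans (congrArg φ.obj m.2.2)) ≫ n.2.1, by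
    obtain ⟨b, u, hu⟩ := m
    obtain ⟨c, v, hv⟩ := n
    dsimp at *
    subst hu
    rw [φ.p_comp]
    simpa using hv⟩

theorem LambdaHom.ext' {φ : Cofunctor B A} {a a' : A} {b x : B} {u : φ.obj a ⟶ b}
    {w : φ.obj a ⟶ x} {h1 : φ.p a w = a'} {h2 : φ.p a u = a'}
    (hx : b = x) (hw : w = u ≫ eqToHom hx) :
    (⟨x, ⟨w, h1⟩⟩ : LambdaHom φ a a') = ⟨b, ⟨u, h2⟩⟩ := by
  subst hx
  subst hw
  simp

/-- The induced category `Λ` of a cofunctor `φ : B ⇸ A`: a type synonym for the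
objects of `A`. -/
def Lambda (φ : Cofunctor B A) := A

instance (φ : Cofunctor B A) : Category (Lambda φ) where
  Hom a a' := LambdaHom φ a a'
  id a := lambdaId φ a
  comp m n := lambdaComp φ m n
  id_comp {a a'} m := by
    obtain ⟨b, u, hu⟩ := m
    dsimp [lambdaComp, lambdaId]
    congr 1
    · ext
      simp
  comp_id {a a'} m := by
    obtain ⟨b, u, hu⟩ := m
    dsimp [lambdaComp, lambdaId]
    subst hu
    exact LambdaHom.ext' (φ.obj_p a u).symm (by simp)
  assoc {a₁ a₂ a₃ a₄} m n k := by
    obtain ⟨b, u, hu⟩ := m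
    obtain ⟨c, v, hv⟩ := n
    obtain ⟨d, w, hw⟩ := k
    dsimp [lambdaComp]
    subst hu; subst hv; subst hw
    congr 1
    · ext
      simp

/-- The morphism assignment `(a, u) ↦ u` of the discrete opfibration `φ̄ : Λ ⟶ B`. -/
def barMap (φ : Cofunctor B A) {a a' : A} (m : LambdaHom φ a a') : φ.obj a ⟶ φ.obj a' :=
  m.2.1 ≫ eqToHom ((φ.obj_p a m.2.1).symm.trans (congrArg φ.obj m.2.2))

/-- The morphism assignment `(a, u) ↦ φ₁(a, u)` of the identity-on-objects functor
`φ : Λ ⟶ A`. -/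
def phiMap (φ : Cofunctor B A) {a a' : A} (m : LambdaHom φ a a') : a ⟶ a' :=
  φ.lift a m.2.1 ≫ eqToHom m.2.2

/-- The discrete opfibration `φ̄ : Λ ⥤ B` induced by a cofunctor, sending
`a ↦ φ₀(a)` and `(a, u) ↦ u`. -/
def barFunctor (φ : Cofunctor B A) : Lambda φ ⥤ B where
  obj a := φ.obj a
  map m := barMap φ m
  map_id a := by
    dsimp [barMap, lambdaId, CategoryStruct.id]
    simp [lambdaId]
  map_comp {a a' a''} m n := by
    obtain ⟨b, u, hu⟩ := m
    obtain ⟨c, v, hv⟩ := n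
    dsimp [barMap, CategoryStruct.comp, lambdaComp]
    subst hu; subst hv
    simp

/-- The identity-on-objects functor `φ : Λ ⥤ A` induced by a cofunctor, sending
`a ↦ a` and `(a, u) ↦ φ₁(a, u)`. -/
def phiFunctor (φ : Cofunctor B A) : Lambda φ ⥤ A where
  obj a := a
  map m := phiMap φ m
  map_id (a : A) := by
    dsimp [phiMap, CategoryStruct.id]
    simp [lambdaId, φ.lift_id]
    exact (eqToHom_trans _ _).trans (eqToHom_refl _ _)
  map_comp {a a' a'' : A} m n := by
    obtain ⟨b, u, hu⟩ := m
    obtain ⟨c, v, hv⟩ := n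
    dsimp [phiMap, CategoryStruct.comp, lambdaComp]
    subst hu; subst hv
    rw [φ.lift_comp]
    simp

theorem Cofunctor.p_eqToHom (φ : Cofunctor B A) (a : A) {x : B} (e : φ.obj a = x) :
    φ.p a (eqToHom e) = a := by
  subst e
  simpa using φ.p_id a

theorem Cofunctor.lift_eqToHom (φ : Cofunctor B A) (a : A) {x : B} (e : φ.obj a = x) :
    φ.lift a (eqToHom e) = eqToHom (φ.p_eqToHom a e).symm := by
  subst e
  simpa using φ.lift_id a

theorem Cofunctor.p_comp_eqToHom (φ : Cofunctor B A) (a : A) {b c : B}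
    (u : φ.obj a ⟶ b) (e : b = c) : φ.p a (u ≫ eqToHom e) = φ.p a u := by
  subst e
  simp

theorem Cofunctor.lift_comp_eqToHom (φ : Cofunctor B A) (a : A) {b c : B}
    (u : φ.obj a ⟶ b) (e : b = c) :
    φ.lift a (u ≫ eqToHom e) =
      φ.lift a u ≫ eqToHom (φ.p_comp_eqToHom a u e).symm := by
  subst e
  simp

theorem Cofunctor.p_conj (γ : Cofunctor B A) {a' a : A} (he : a' = a) {b b' : B}
    (E : γ.obj a' = b) (E' : γ.obj a = b) (x : b ⟶ b') :
    γ.p a' (eqToHom E ≫ x) = γ.p a (eqToHom E' ≫ x) := by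
  subst he; rfl

theorem Cofunctor.lift_conj (γ : Cofunctor B A) {a' a : A} (he : a' = a) {b b' : B}
    (E : γ.obj a' = b) (E' : γ.obj a = b) (x : b ⟶ b') :
    γ.lift a' (eqToHom E ≫ x) =
      eqToHom he ≫ γ.lift a (eqToHom E' ≫ x) ≫ eqToHom (γ.p_conj he E E' x).symm := by
  subst he; simp

theorem Cofunctor.p_congr (φ : Cofunctor B A) (a : A) {b : B} {u v : φ.obj a ⟶ b}
    (h : u = v) : φ.p a u = φ.p a v := by rw [h]

theorem Cofunctor.lift_congr (φ : Cofunctor B A) (a : A) {b : B} {u v : φ.obj a ⟶ b}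
    (h : u = v) : φ.lift a u = φ.lift a v ≫ eqToHom (φ.p_congr a h).symm := by
  subst h; simp

theorem Cofunctor.p_shape (φ : Cofunctor B A) (a : A) {x y z : B}
    (e₁ : φ.obj a = x) (L : x ⟶ y) (e₂ : y = z) :
    φ.p a (eqToHom e₁ ≫ L ≫ eqToHom e₂) = φ.p a (eqToHom e₁ ≫ L) := by
  subst e₂; simp

theorem Cofunctor.lift_shape (φ : Cofunctor B A) (a : A) {x y z : B}
    (e₁ : φ.obj a = x) (L : x ⟶ y) (e₂ : y = z) :
    φ.lift a (eqToHom e₁ ≫ L ≫ eqToHom e₂) =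
      φ.lift a (eqToHom e₁ ≫ L) ≫ eqToHom (φ.p_shape a e₁ L e₂).symm := by
  subst e₂; simp

/-- The composite of cofunctors `φ : B ⇸ A` and `γ : C ⇸ B`: the object map is
`a ↦ γ₀(φ₀(a))` and the lift of `(a, w : γ₀(φ₀(a)) ⟶ c)` is `φ₁(a, γ₁(φ₀(a), w))`,
with codomain `p₀(a, γ₁(φ₀(a), w))`. -/
def Cofunctor.comp {C : Type u₃} [Category.{v₃} C] (φ : Cofunctor B A) (γ : Cofunctor C B) :
    Cofunctor C A where
  obj a := γ.obj (φ.obj a)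
  p a _ w := φ.p a (γ.lift (φ.obj a) w)
  lift a _ w := φ.lift a (γ.lift (φ.obj a) w)
  obj_p a _ w := ((congrArg γ.obj (φ.obj_p a (γ.lift (φ.obj a) w))).trans
    (γ.obj_p (φ.obj a) w))
  p_id a := by
    rw [γ.lift_id, φ.p_eqToHom]
  lift_id a := by
    rw [φ.lift_congr a (γ.lift_id (φ.obj a)), φ.lift_eqToHom]
    simp
  p_comp a c c' w x := by
    rw [γ.lift_comp, φ.p_comp,
      γ.lift_conj (φ.obj_p a (γ.lift (φ.obj a) w)) _ (γ.obj_p (φ.obj a) w) x,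
      ← Category.assoc, ← Category.assoc, φ.p_comp_eqToHom, φ.p_comp_eqToHom]
  lift_comp a c c' w x := by
    rw [φ.lift_congr a (γ.lift_comp (φ.obj a) w x), φ.lift_comp,
      φ.lift_congr _ (γ.lift_conj (φ.obj_p a (γ.lift (φ.obj a) w)) _ (γ.obj_p (φ.obj a) w) x),
      φ.lift_shape, φ.lift_shape]
    simp

/-- A delta lens `(f, φ) : A ⇄ B`: a Get functor `f : A ⥤ B` together with a Put
cofunctor `φ : B ⇸ A` agreeing with `f` on objects and satisfying the Put-Get law
`f(φ₁(a, u)) = u`. -/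
structure DLens (A : Type u₂) (B : Type u₁) [Category.{v₂} A] [Category.{v₁} B] where
  get : A ⥤ B
  put : Cofunctor B A
  obj_eq : ∀ a : A, put.obj a = get.obj a
  put_get : ∀ (a : A) ⦃b : B⦄ (u : put.obj a ⟶ b),
    get.map (put.lift a u) =
      eqToHom (obj_eq a).symm ≫ u ≫ eqToHom ((put.obj_p a u).symm.trans (obj_eq _))

/-- The strict pullback of two functors `F : X ⥤ Z` and `G : Y ⥤ Z`: objects are
pairs of objects with `F.obj x = G.obj y`, morphisms are pairs of morphisms with
`F.map m = G.map n` (modulo the identifications of endpoints). -/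
def FPullback {X : Type u₃} {Y : Type u₄} {Z : Type u} [Category.{v₃} X]
    [Category.{v₄} Y] [Category.{v} Z] (F : X ⥤ Z) (G : Y ⥤ Z) :=
  { pq : X × Y // F.obj pq.1 = G.obj pq.2 }

instance {X : Type u₃} {Y : Type u₄} {Z : Type u} [Category.{v₃} X]
    [Category.{v₄} Y] [Category.{v} Z] (F : X ⥤ Z) (G : Y ⥤ Z) :
    Category (FPullback F G) where
  Hom pq rs := { mn : (pq.1.1 ⟶ rs.1.1) × (pq.1.2 ⟶ rs.1.2) //
    F.map mn.1 = eqToHom pq.2 ≫ G.map mn.2 ≫ eqToHom rs.2.symm }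
  id pq := ⟨(𝟙 _, 𝟙 _), by simp⟩
  comp {pq rs tu} mn mn' := ⟨(mn.1.1 ≫ mn'.1.1, mn.1.2 ≫ mn'.1.2), by
    rw [F.map_comp, G.map_comp, mn.2, mn'.2]; simp⟩
  id_comp mn := by
    apply Subtype.ext
    dsimp
    simp
  comp_id mn := by
    apply Subtype.ext
    dsimp
    simp
  assoc m n k := by
    apply Subtype.ext
    dsimp
    simp

section Aux

theorem Cofunctor.p_comp' (φ : Cofunctor B A) {a x : A} {b c : B} (u : φ.obj a ⟶ b)
    (hx : φ.p a u = x) (v : φ.obj x ⟶ c) :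
    φ.p a (u ≫ eqToHom ((φ.obj_p a u).symm.trans (congrArg φ.obj hx)) ≫ v) = φ.p x v := by
  subst hx
  rw [φ.p_comp]
  exact φ.p_congr _ (by simp)

theorem Cofunctor.lift_comp' (φ : Cofunctor B A) {a x : A} {b c : B} (u : φ.obj a ⟶ b)
    (hx : φ.p a u = x) (v : φ.obj x ⟶ c) :
    φ.lift a (u ≫ eqToHom ((φ.obj_p a u).symm.trans (congrArg φ.obj hx)) ≫ v) =
      φ.lift a u ≫ eqToHom hx ≫ φ.lift x v ≫ eqToHom (φ.p_comp' u hx v).symm := by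
  subst hx
  rw [φ.lift_comp, φ.lift_congr _ (show eqToHom (φ.obj_p a u) ≫
    eqToHom ((φ.obj_p a u).symm.trans (congrArg φ.obj (Eq.refl (φ.p a u)))) ≫ v = v by simp)]
  simp only [eqToHom_trans, eqToHom_refl, Category.id_comp, Category.assoc]

theorem Lambda.id_eq (φ : Cofunctor B A) (a : Lambda φ) : 𝟙 a = lambdaId φ a := rfl

theorem Lambda.comp_eq (φ : Cofunctor B A) {a a' a'' : Lambda φ} (m : a ⟶ a')
    (n : a' ⟶ a'') : m ≫ n = lambdaComp φ m n := rfl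

variable {X : Type u₃} {Y : Type u₄} {Z : Type u} [Category.{v₃} X]
  [Category.{v₄} Y] [Category.{v} Z]

theorem FPullback.hom_ext {F : X ⥤ Z} {G : Y ⥤ Z} {pq rs : FPullback F G}
    {mn mn' : pq ⟶ rs} (h1 : mn.1.1 = mn'.1.1) (h2 : mn.1.2 = mn'.1.2) : mn = mn' :=
  Subtype.ext (Prod.ext h1 h2)

theorem FPullback.id_fst {F : X ⥤ Z} {G : Y ⥤ Z} (pq : FPullback F G) :
    (𝟙 pq : pq ⟶ pq).1.1 = 𝟙 pq.1.1 := rfl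

theorem FPullback.id_snd {F : X ⥤ Z} {G : Y ⥤ Z} (pq : FPullback F G) :
    (𝟙 pq : pq ⟶ pq).1.2 = 𝟙 pq.1.2 := rfl

theorem FPullback.comp_fst {F : X ⥤ Z} {G : Y ⥤ Z} {pq rs tu : FPullback F G}
    (mn : pq ⟶ rs) (mn' : rs ⟶ tu) : (mn ≫ mn').1.1 = mn.1.1 ≫ mn'.1.1 := rfl

theorem FPullback.comp_snd {F : X ⥤ Z} {G : Y ⥤ Z} {pq rs tu : FPullback F G}
    (mn : pq ⟶ rs) (mn' : rs ⟶ tu) : (mn ≫ mn').1.2 = mn.1.2 ≫ mn'.1.2 := rfl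

end Aux

theorem eqToHom_comp_aux {D : Type*} [Category D] {X0 X1 c Y0 Y1 c' : D}
    (e1 e3 : X0 = X1) (v : X1 ⟶ c) (e2 : c = Y1) (e4 : c = Y0) (e5 : Y0 = Y1)
    (v' : Y1 ⟶ c') (e6 : c' = c') :
    eqToHom e1 ≫ v ≫ eqToHom e2 ≫ v' =
      ((eqToHom e3 ≫ v) ≫ eqToHom e4 ≫ eqToHom e5 ≫ v') ≫ eqToHom e6 := by
  subst e5
  simp

theorem eqToHom_comp_aux2 {D : Type*} [Category D] {P Q R S T U : D}
    (e1 : P = P) (X : P ⟶ Q) (e0 : Q = U) (e2 : Q = R) (e3 : R = S) (e4 : S = T)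
    (e5 : T = U) :
    X ≫ eqToHom e0 = ((eqToHom e1 ≫ X ≫ eqToHom e2 ≫ eqToHom e3) ≫ eqToHom e4) ≫ eqToHom e5 := by
  subst e2 e3 e4 e5
  simp

section CompFunctors

variable {C : Type u₃} [Category.{v₃} C]

/-- The comparison functor from the induced category of a composite cofunctor to the
pullback. -/
def compF (φ : Cofunctor B A) (γ : Cofunctor C B) :
    Lambda (φ.comp γ) ⥤ FPullback (barFunctor φ) (phiFunctor γ) where
  obj a := ⟨(a, φ.obj a), rfl⟩
  map {a a'} m :=
    ⟨(⟨γ.p (φ.obj a) m.2.1, γ.lift (φ.obj a) m.2.1, m.2.2⟩,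
      ⟨m.1, m.2.1, (φ.obj_p a (γ.lift (φ.obj a) m.2.1)).symm.trans (congrArg φ.obj m.2.2)⟩),
     by dsimp [barFunctor, phiFunctor, barMap, phiMap]; erw [eqToHom_refl, Category.id_comp]; simp⟩
  map_id a := by
    apply FPullback.hom_ext
    · dsimp [Lambda.id_eq, lambdaId, FPullback.id_fst]
      refine LambdaHom.ext' (γ.p_id (φ.obj a)).symm ?_
      erw [γ.lift_id]
      simp
      rfl
    · rfl
  map_comp {a a' a''} m n := by
    obtain ⟨c, w, hw⟩ := m
    obtain ⟨c', v, hv⟩ := n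
    apply FPullback.hom_ext
    · erw [FPullback.comp_fst]
      dsimp [Lambda.comp_eq, lambdaComp]
      have hx : γ.p (φ.obj a) w = φ.obj a' :=
        (φ.obj_p a (γ.lift (φ.obj a) w)).symm.trans (congrArg φ.obj hw)
      refine LambdaHom.ext' (γ.p_comp' w hx v).symm ?_
      erw [γ.lift_comp' w hx v]
      simp
      rfl
    · rfl

/-- The comparison functor from the pullback to the induced category of a composite
cofunctor. -/
def compG (φ : Cofunctor B A) (γ : Cofunctor C B) :
    FPullback (barFunctor φ) (phiFunctor γ) ⥤ Lambda (φ.comp γ) where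
  obj pq := pq.1.1
  map {pq rs} mn :=
    ⟨mn.1.2.1, eqToHom (congrArg γ.obj pq.2) ≫ mn.1.2.2.1, by
      obtain ⟨⟨a, b⟩, h⟩ := pq
      obtain ⟨⟨a', b'⟩, h'⟩ := rs
      obtain ⟨⟨m, n⟩, hc⟩ := mn
      obtain ⟨d, u, hu⟩ := m
      obtain ⟨c, v, hv⟩ := n
      dsimp [barFunctor, phiFunctor, barMap, phiMap] at h h' hc ⊢
      subst h
      subst h'
      simp only [eqToHom_refl, Category.comp_id, Category.id_comp, Category.assoc,
        eqToHom_trans] at hc ⊢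
      rw [comp_eqToHom_iff] at hc
      dsimp at hu hv hc ⊢
      rw [← hu, hc]
      simp only [← Category.assoc]
      erw [φ.p_comp_eqToHom, φ.p_comp_eqToHom, φ.p_comp_eqToHom]
      erw [eqToHom_refl, Category.id_comp, eqToHom_refl, Category.id_comp]
      rfl⟩
  map_id pq := by
    obtain ⟨⟨a, b⟩, h⟩ := pq
    dsimp [barFunctor, phiFunctor] at h
    subst h
    dsimp [Lambda.id_eq, lambdaId, FPullback.id_snd]
    exact LambdaHom.ext' rfl (by simp; exact Category.comp_id _)
  map_comp {pq rs tu} mn mn' := by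
    obtain ⟨⟨a, b⟩, h⟩ := pq
    obtain ⟨⟨a', b'⟩, h'⟩ := rs
    obtain ⟨⟨a'', b''⟩, h''⟩ := tu
    obtain ⟨⟨m, n⟩, hc⟩ := mn
    obtain ⟨⟨m', n'⟩, hc'⟩ := mn'
    obtain ⟨c, v, hv⟩ := n
    obtain ⟨c', v', hv'⟩ := n'
    dsimp [barFunctor, phiFunctor] at h h' h''
    subst h
    subst h'
    subst h''
    refine LambdaHom.ext' rfl ?_
    simp only [FPullback.comp_snd, Lambda.comp_eq]
    show eqToHom _ ≫ (lambdaComp γ ⟨c, v, hv⟩ ⟨c', v', hv'⟩).2.1 = _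
    dsimp [lambdaComp]
    exact eqToHom_comp_aux (D := C) _ _ _ _ _ _ _ _

end CompFunctors

/-- For delta lenses `(f, φ) : A ⇄ B` and `(g, γ) : B ⇄ C`, the induced category of
the composite delta lens is isomorphic, as a category, to the pullback `Λ ×_B Ω` of
the discrete opfibration `φ̄ : Λ ⥤ B` and the identity-on-objects functor
`γ : Ω ⥤ B`. -/
theorem composite_lambda_iso_pullback {C : Type u₃} [Category.{v₃} C]
    (L₁ : DLens A B) (L₂ : DLens B C) :
    ∃ (F : Lambda (L₁.put.comp L₂.put) ⥤ FPullback (barFunctor L₁.put) (phiFunctor L₂.put))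
      (G : FPullback (barFunctor L₁.put) (phiFunctor L₂.put) ⥤ Lambda (L₁.put.comp L₂.put)),
      F ⋙ G = 𝟭 (Lambda (L₁.put.comp L₂.put)) ∧
      G ⋙ F = 𝟭 (FPullback (barFunctor L₁.put) (phiFunctor L₂.put)) := by
  set φ := L₁.put
  set γ := L₂.put
  refine ⟨compF φ γ, compG φ γ, ?_, ?_⟩
  · refine CategoryTheory.Functor.ext (fun a => rfl) ?_
    intro a a' m
    obtain ⟨c, w, hw⟩ := m
    dsimp [compF, compG, Functor.comp]
    show _ = 𝟙 a ≫ _ ≫ 𝟙 a'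
    rw [Category.id_comp, Category.comp_id]
    exact LambdaHom.ext' rfl ((Category.id_comp w).trans (Category.comp_id w).symm)
  · refine CategoryTheory.Functor.ext (fun pq => ?_) ?_
    · obtain ⟨⟨a, b⟩, h⟩ := pq
      dsimp [compF, compG, barFunctor, phiFunctor, Functor.comp] at h ⊢
      subst h
      rfl
    · intro pq rs mn
      obtain ⟨⟨a, b⟩, h⟩ := pq
      obtain ⟨⟨a', b'⟩, h'⟩ := rs
      obtain ⟨⟨m, n⟩, hc⟩ := mn
      obtain ⟨d, u, hu⟩ := m
      obtain ⟨c, v, hv⟩ := n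
      dsimp [barFunctor, phiFunctor] at h h'
      subst h
      subst h'
      dsimp [compF, compG, barFunctor, phiFunctor, barMap, phiMap, Functor.comp] at hc ⊢
      simp only [eqToHom_refl, Category.comp_id, Category.id_comp, Category.assoc,
        eqToHom_trans] at hc ⊢
      rw [comp_eqToHom_iff] at hc
      dsimp at hu hv hc ⊢
      show _ = @CategoryStruct.id (FPullback (barFunctor φ) (phiFunctor γ)) _ ⟨(a, φ.obj a), rfl⟩ ≫
        _ ≫ @CategoryStruct.id (FPullback (barFunctor φ) (phiFunctor γ)) _ ⟨(a', φ.obj a'), rfl⟩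
      refine Eq.trans ?_ (Category.id_comp _).symm
      refine Eq.trans ?_ (Category.comp_id _).symm
      apply Subtype.ext
      apply Prod.ext
      · have hk : (𝟙 ((φ.comp γ).obj a) ≫ v : γ.obj (φ.obj a) ⟶ c) = v := Category.id_comp v
        have R : γ.p (φ.obj a) v = d :=
          hv.trans ((φ.obj_p a u).symm.trans (congrArg φ.obj hu)).symm
        have hx : d = γ.p (φ.obj a) (𝟙 ((φ.comp γ).obj a) ≫ v) :=
          (R.symm).trans (γ.p_congr (φ.obj a) hk).symm
        refine LambdaHom.ext' hx ?_
        refine (γ.lift_congr (φ.obj a) hk).trans ?_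
        rw [hc]
        exact eqToHom_comp_aux2 (D := B) _ _ _ _ _ _ _
      · exact LambdaHom.ext' rfl ((Category.id_comp v).trans (Category.comp_id v).symm)
end

section
/- Let φ be a cofunctor from a small category B to a small category A such that the map sending each pair (a, u : φ₀(a) → b) to the morphism φ₁(a, u) of A is a bijection onto the set of all morphisms of A. Then the assignment sending each object a of A to φ₀(a) and each morphism m : a → a′ of A to the unique u with φ₁(a, u) = m defines a discrete opfibration from A to B. -/
open CategoryTheory

universe v v₁ v₂ v₃ v₄ u u₁ u₂ u₃ u₄

variable {B : Type u₁} {A : Type u₂} [Category.{v₁} B] [Category.{v₂} A]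

/-- A functor is a discrete opfibration if every morphism out of the image of an
object has a unique lift with prescribed domain. -/
def IsDiscreteOpfib {A : Type u₂} {B : Type u₁} [Category.{v₂} A] [Category.{v₁} B]
    (F : A ⥤ B) : Prop :=
  ∀ ⦃a : A⦄ ⦃b : B⦄ (u : F.obj a ⟶ b),
    ∃! w : Σ a' : A, a ⟶ a',
      (⟨F.obj w.1, F.map w.2⟩ : Σ b' : B, (F.obj a ⟶ b')) = ⟨b, u⟩

namespace MyAux

variable (φ : Cofunctor B A)

theorem lift_congr {a : A} {b : B} {u u' : φ.obj a ⟶ b} (h : u = u') :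
    φ.lift a u = φ.lift a u' ≫ eqToHom (by rw [h]) := by subst h; simp

theorem p_comp' (a : A) {b c : B} (u : φ.obj a ⟶ b) (v : φ.obj (φ.p a u) ⟶ c) :
    φ.p a (u ≫ eqToHom (φ.obj_p a u).symm ≫ v) = φ.p (φ.p a u) v := by
  rw [φ.p_comp]; congr 1; simp

theorem lift_comp' (a : A) {b c : B} (u : φ.obj a ⟶ b) (v : φ.obj (φ.p a u) ⟶ c) :
    φ.lift a u ≫ φ.lift (φ.p a u) v =
      φ.lift a (u ≫ eqToHom (φ.obj_p a u).symm ≫ v) ≫ eqToHom (p_comp' φ a u v) := by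
  have h2 : eqToHom (φ.obj_p a u) ≫ eqToHom (φ.obj_p a u).symm ≫ v = v := by simp
  have h1 := φ.lift_comp a u (eqToHom (φ.obj_p a u).symm ≫ v)
  rw [lift_congr φ h2.symm, h1]
  simp

section
variable (hbij : Function.Bijective
      (fun x : Σ (a : A) (b : B), (φ.obj a ⟶ b) =>
        (⟨x.1, φ.p x.1 x.2.2, φ.lift x.1 x.2.2⟩ : Σ (a : A) (a' : A), (a ⟶ a'))))
include hbij

theorem key {a a' : A} (m : a ⟶ a') :
    ∃! x : Σ b : B, (φ.obj a ⟶ b),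
      (⟨φ.p a x.2, φ.lift a x.2⟩ : Σ c : A, (a ⟶ c)) = ⟨a', m⟩ := by
  obtain ⟨⟨a₀, b, u⟩, hy⟩ := hbij.2 ⟨a, a', m⟩
  obtain ⟨ha, hrest⟩ := Sigma.mk.inj_iff.mp hy
  subst ha
  refine ⟨⟨b, u⟩, eq_of_heq hrest, ?_⟩
  rintro ⟨b', u'⟩ h'
  have heq : (⟨a₀, b', u'⟩ : Σ (a : A) (b : B), (φ.obj a ⟶ b)) = ⟨a₀, b, u⟩ :=
    hbij.1 (congrArg (Sigma.mk a₀) (h'.trans (eq_of_heq hrest).symm))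
  exact eq_of_heq (Sigma.mk.inj_iff.mp heq).2

noncomputable def Fchoose {a a' : A} (m : a ⟶ a') : Σ b : B, (φ.obj a ⟶ b) :=
  (key φ hbij m).exists.choose

theorem Fchoose_spec {a a' : A} (m : a ⟶ a') :
    (⟨φ.p a (Fchoose φ hbij m).2, φ.lift a (Fchoose φ hbij m).2⟩ : Σ c : A, (a ⟶ c))
      = ⟨a', m⟩ :=
  (key φ hbij m).exists.choose_spec

theorem Fchoose_fst {a a' : A} (m : a ⟶ a') : (Fchoose φ hbij m).1 = φ.obj a' := by
  have h := Fchoose_spec φ hbij m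
  exact (φ.obj_p a (Fchoose φ hbij m).2).symm.trans (congrArg φ.obj (Sigma.mk.inj_iff.mp h).1)

noncomputable def Fmap {a a' : A} (m : a ⟶ a') : φ.obj a ⟶ φ.obj a' :=
  (Fchoose φ hbij m).2 ≫ eqToHom (Fchoose_fst φ hbij m)

theorem Fchoose_lift (a : A) {b : B} (u : φ.obj a ⟶ b) :
    Fchoose φ hbij (φ.lift a u) = ⟨b, u⟩ :=
  (key φ hbij (φ.lift a u)).unique (Fchoose_spec φ hbij _) rfl

theorem Fmap_lift (a : A) {b : B} (u : φ.obj a ⟶ b) :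
    Fmap φ hbij (φ.lift a u) = u ≫ eqToHom (φ.obj_p a u).symm := by
  have hx := Fchoose_lift φ hbij a u
  unfold Fmap
  have : ∀ (x : Σ b : B, (φ.obj a ⟶ b)) (hx : x = ⟨b, u⟩)
      (hh : x.1 = φ.obj (φ.p a u)), x.2 ≫ eqToHom hh = u ≫ eqToHom (φ.obj_p a u).symm := by
    rintro ⟨b₀, u₀⟩ hx hh
    cases hx
    rfl
  exact this _ hx _

theorem Fmap_comp_eqToHom {a a' a'' : A} (m : a ⟶ a') (h : a' = a'') :
    Fmap φ hbij (m ≫ eqToHom h) = Fmap φ hbij m ≫ eqToHom (congrArg φ.obj h) := by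
  subst h; simp

noncomputable def Ffun : A ⥤ B where
  obj := φ.obj
  map {a a'} m := Fmap φ hbij m
  map_id a := by
    have h : φ.lift a (𝟙 (φ.obj a)) ≫ eqToHom (φ.p_id a) = 𝟙 a := by
      rw [φ.lift_id]; simp
    have := Fmap_comp_eqToHom φ hbij (φ.lift a (𝟙 (φ.obj a))) (φ.p_id a)
    rw [h, Fmap_lift φ hbij] at this
    show Fmap φ hbij (𝟙 a) = 𝟙 (φ.obj a)
    rw [this]; simp
  map_comp {a a' a''} m n := by
    obtain ⟨⟨b, u⟩, hm, _⟩ := key φ hbij m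
    obtain ⟨hp, hl⟩ := Sigma.mk.inj_iff.mp hm
    subst hp
    have hm' : φ.lift a u = m := eq_of_heq hl
    subst hm'
    obtain ⟨⟨c, v⟩, hn, _⟩ := key φ hbij n
    obtain ⟨hp', hl'⟩ := Sigma.mk.inj_iff.mp hn
    subst hp'
    have hn' : φ.lift (φ.p a u) v = n := eq_of_heq hl'
    subst hn'
    show Fmap φ hbij _ = Fmap φ hbij _ ≫ Fmap φ hbij _
    rw [lift_comp' φ a u v, Fmap_comp_eqToHom φ hbij, Fmap_lift φ hbij,
      Fmap_lift φ hbij, Fmap_lift φ hbij]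
    simp

theorem Ffun_opfib : IsDiscreteOpfib (Ffun φ hbij) := by
  intro a b u
  change φ.obj a ⟶ b at u
  refine ⟨⟨φ.p a u, φ.lift a u⟩, ?_, ?_⟩
  · show (⟨φ.obj (φ.p a u), Fmap φ hbij (φ.lift a u)⟩ : Σ b' : B, (φ.obj a ⟶ b')) = ⟨b, u⟩
    rw [Fmap_lift φ hbij]
    exact Sigma.ext_iff.mpr ⟨φ.obj_p a u, comp_eqToHom_heq _ _⟩
  · rintro ⟨a₁, m⟩ h
    obtain ⟨⟨b₁, u₁⟩, hm, _⟩ := key φ hbij m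
    obtain ⟨hp, hl⟩ := Sigma.mk.inj_iff.mp hm
    subst hp
    have hm' : φ.lift a u₁ = m := eq_of_heq hl
    subst hm'
    replace h : (⟨φ.obj (φ.p a u₁), Fmap φ hbij (φ.lift a u₁)⟩ : Σ b' : B, (φ.obj a ⟶ b'))
        = ⟨b, u⟩ := h
    rw [Fmap_lift φ hbij] at h
    obtain ⟨hb, hH⟩ := Sigma.mk.inj_iff.mp h
    have hb1 : b₁ = b := (φ.obj_p a u₁).symm.trans hb
    subst hb1
    have hu : u₁ = u := eq_of_heq ((comp_eqToHom_heq _ _).symm.trans hH)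
    subst hu
    rfl

end
end MyAux

/-- If the map sending each pair `(a, u : φ₀(a) ⟶ b)` to the lift `φ₁(a, u)` is a
bijection onto the set of all morphisms of `A`, then sending each object `a` to
`φ₀(a)` and each morphism `m : a ⟶ a′` of `A` to the unique `u` with `φ₁(a, u) = m`
defines a discrete opfibration from `A` to `B`. -/
theorem cofunctor_bijective_lifts_discreteOpfibration (φ : Cofunctor B A)
    (hbij : Function.Bijective
      (fun x : Σ (a : A) (b : B), (φ.obj a ⟶ b) =>
        (⟨x.1, φ.p x.1 x.2.2, φ.lift x.1 x.2.2⟩ : Σ (a : A) (a' : A), (a ⟶ a')))) :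
    ∃ (F : A ⥤ B) (h : ∀ a : A, F.obj a = φ.obj a),
      (∀ (a : A) ⦃b : B⦄ (u : φ.obj a ⟶ b),
        F.map (φ.lift a u) =
          eqToHom (h a) ≫ u ≫ eqToHom ((φ.obj_p a u).symm.trans (h _).symm)) ∧
      IsDiscreteOpfib F := by
  exact ⟨MyAux.Ffun φ hbij, fun a => rfl, fun a b u => by
    have := MyAux.Fmap_lift φ hbij a u
    show MyAux.Fmap φ hbij (φ.lift a u) =
      eqToHom (rfl : φ.obj a = φ.obj a) ≫ u ≫ eqToHom (φ.obj_p a u).symm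
    simpa using this, MyAux.Ffun_opfib φ hbij⟩
end

section
/- Let A and B be sets and let (f, p) be a state-based lens: f : A → B and p : A × B → A satisfy the Put-Get law f(p(a, b)) = b, the Get-Put law p(a, f(a)) = a, and the Put-Put law p(p(a, b), b′) = p(a, b′). Then the following data forms a small category Λ: the objects are the elements of A; a morphism from a to a′ is a pair (a, b) ∈ A × B with p(a, b) = a′; the identity on a is (a, f(a)); and the composite of (a, b) : a → p(a, b) followed by (p(a, b), b′) : p(a, b) → p(p(a, b), b′) is (a, b′). -/
universe u v

/-- A morphism `a → a′` of the category induced by a state-based lens `(f, p)`: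
a pair `(a, b)` with `p(a, b) = a′`. -/
def SLHom {A : Type u} {B : Type v} (p : A × B → A) (a a' : A) : Type v :=
  { b : B // p (a, b) = a' }

/-- The identity morphism `(a, f(a))`. -/
def slId {A : Type u} {B : Type v} (f : A → B) (p : A × B → A)
    (hGetPut : ∀ a, p (a, f a) = a) (a : A) : SLHom p a a :=
  ⟨f a, hGetPut a⟩

/-- The composition: `(p(a, b), b′) ∘ (a, b) = (a, b′)`. -/
def slComp {A : Type u} {B : Type v} (p : A × B → A)
    (hPutPut : ∀ a b b', p (p (a, b), b') = p (a, b')) {a a' a'' : A}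
    (m : SLHom p a a') (n : SLHom p a' a'') : SLHom p a a'' :=
  ⟨n.1, by
    obtain ⟨b, hb⟩ := m
    obtain ⟨b', hb'⟩ := n
    subst hb
    dsimp
    rw [← hPutPut a b b']
    exact hb'⟩

/-- Given a state-based lens `(f, p) : A ⇄ B` (satisfying the Put-Get, Get-Put and
Put-Put laws), the elements of `A` with morphisms `a → a′` the pairs `(a, b)` with
`p(a, b) = a′`, identities `(a, f(a))` and composition `(p(a, b), b′) ∘ (a, b) = (a, b′)`
form a category `Λ`. -/
theorem state_lens_forms_category {A : Type u} {B : Type v} (f : A → B) (p : A × B → A)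
    (hPutGet : ∀ a b, f (p (a, b)) = b)
    (hGetPut : ∀ a, p (a, f a) = a)
    (hPutPut : ∀ a b b', p (p (a, b), b') = p (a, b')) :
    (∀ (a a' : A) (m : SLHom p a a'),
      slComp p hPutPut (slId f p hGetPut a) m = m) ∧
    (∀ (a a' : A) (m : SLHom p a a'),
      slComp p hPutPut m (slId f p hGetPut a') = m) ∧
    (∀ (a₁ a₂ a₃ a₄ : A) (m : SLHom p a₁ a₂) (n : SLHom p a₂ a₃) (k : SLHom p a₃ a₄),
      slComp p hPutPut (slComp p hPutPut m n) k =
        slComp p hPutPut m (slComp p hPutPut n k)) := by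
  refine ⟨fun a a' m => Subtype.ext rfl, fun a a' m => ?_, fun _ _ _ _ _ _ _ => Subtype.ext rfl⟩
  obtain ⟨b, hb⟩ := m
  apply Subtype.ext
  show f a' = b
  rw [← hb, hPutGet]
end
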